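/- Let (Ω, 𝔉, μ) be a finite measure space and let γ : ℝ^d → [0, ∞) be a nonnegative, convex function, Lipschitz continuous with constant L ≥ 0, with mollifications γ_ε. Let (εₙ)ₙ ⊂ [0, ∞) with εₙ → 0, let Wₙ → W strongly in L²(μ; ℝ^d), and let (ξₙ)ₙ ⊂ L²(μ; ℝ^d) converge weakly to ξ in L²(μ; ℝ^d) (i.e. ⟪ξₙ, Z⟫ → ⟪ξ, Z⟫ for all Z), where for each n and μ-almost every x ∈ Ω, ξₙ(x) ∈ ∂γ_{εₙ}(Wₙ(x)), i.e. ⟨ξₙ(x), z − Wₙ(x)⟩ ≤ γ_{εₙ}(z) − γ_{εₙ}(Wₙ(x)) for all z ∈ ℝ^d. Then ξ(x) ∈ ∂γ(W(x)) for μ-almost every x ∈ Ω, and moreover ∫_Ω γ_{εₙ}(Wₙ(x)) dμ(x) → ∫_Ω γ(W(x)) dμ(x) as n → ∞. -/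

import Mathlib

open Filter MeasureTheory

/-- The mollification `γ_ε := ρ_ε * γ`, with `γ_0 := γ`, where
`ρ_ε(x) = ε^{-d} ρ(x/ε)`. -/
noncomputable def mollify {d : ℕ} (ρ γ : EuclideanSpace ℝ (Fin d) → ℝ) (ε : ℝ)
    (x : EuclideanSpace ℝ (Fin d)) : ℝ :=
  if ε = 0 then γ x else ∫ y, (ε ^ d)⁻¹ * ρ (ε⁻¹ • y) * γ (x - y)

section Aux

variable {d : ℕ} {ρ : EuclideanSpace ℝ (Fin d) → ℝ}

lemma kernel_integral (hρ_int : ∫ x, ρ x = 1) {ε : ℝ} (hε : 0 < ε) :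
    ∫ y : EuclideanSpace ℝ (Fin d), (ε ^ d)⁻¹ * ρ (ε⁻¹ • y) = 1 := by
  have h := MeasureTheory.Measure.integral_comp_inv_smul
    (volume : Measure (EuclideanSpace ℝ (Fin d))) ρ ε
  rw [MeasureTheory.integral_const_mul, h, finrank_euclideanSpace_fin, hρ_int, smul_eq_mul,
    mul_one, abs_of_nonneg (pow_nonneg hε.le _), inv_mul_cancel₀ (pow_ne_zero _ hε.ne')]

lemma kernel_integrable (hρc : Continuous ρ)
    (hρ_supp : Function.support ρ ⊆ Metric.closedBall 0 1)
    {ε : ℝ} (hε : 0 < ε) {f : EuclideanSpace ℝ (Fin d) → ℝ} (hf : Continuous f) :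
    Integrable (fun y => (ε ^ d)⁻¹ * ρ (ε⁻¹ • y) * f y) := by
  apply Continuous.integrable_of_hasCompactSupport
  · exact ((continuous_const.mul (hρc.comp (continuous_const_smul _))).mul hf)
  · apply HasCompactSupport.intro (isCompact_closedBall (0 : EuclideanSpace ℝ (Fin d)) ε)
    intro y hy
    have hρy : ρ (ε⁻¹ • y) = 0 := by
      by_contra h
      have := hρ_supp h
      simp only [Metric.mem_closedBall, dist_zero_right] at this hy
      rw [norm_smul, norm_inv, Real.norm_eq_abs, abs_of_pos hε] at this
      have hle : ‖y‖ ≤ ε := by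
        have := mul_le_mul_of_nonneg_left this hε.le
        rwa [mul_one, ← mul_assoc, mul_inv_cancel₀ hε.ne', one_mul] at this
      exact hy hle
    simp [hρy]

lemma kernel_est (hρc : Continuous ρ) (hρ_nonneg : ∀ x, 0 ≤ ρ x)
    (hρ_supp : Function.support ρ ⊆ Metric.closedBall 0 1) (hρ_int : ∫ x, ρ x = 1)
    {ε : ℝ} (hε : 0 < ε) {f : EuclideanSpace ℝ (Fin d) → ℝ} (hf : Continuous f) {c : ℝ}
    (hbound : ∀ y : EuclideanSpace ℝ (Fin d), ‖y‖ ≤ ε → |f y| ≤ c) :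
    |∫ y, (ε ^ d)⁻¹ * ρ (ε⁻¹ • y) * f y| ≤ c := by
  have hc : 0 ≤ c := le_trans (abs_nonneg _) (hbound 0 (by simp [hε.le]))
  have hker_nonneg : ∀ y : EuclideanSpace ℝ (Fin d), 0 ≤ (ε ^ d)⁻¹ * ρ (ε⁻¹ • y) :=
    fun y => mul_nonneg (inv_nonneg.2 (pow_nonneg hε.le _)) (hρ_nonneg _)
  have hint : Integrable (fun y : EuclideanSpace ℝ (Fin d) => (ε ^ d)⁻¹ * ρ (ε⁻¹ • y) * c) :=
    kernel_integrable hρc hρ_supp hε continuous_const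
  have hle : ∀ y : EuclideanSpace ℝ (Fin d),
      ‖(ε ^ d)⁻¹ * ρ (ε⁻¹ • y) * f y‖ ≤ (ε ^ d)⁻¹ * ρ (ε⁻¹ • y) * c := by
    intro y
    rcases eq_or_ne (ρ (ε⁻¹ • y)) 0 with h0 | h0
    · simp [h0]
    · have hy : ‖y‖ ≤ ε := by
        have := hρ_supp h0
        simp only [Metric.mem_closedBall, dist_zero_right] at this
        rw [norm_smul, norm_inv, Real.norm_eq_abs, abs_of_pos hε] at this
        have := mul_le_mul_of_nonneg_left this hε.le
        rwa [mul_one, ← mul_assoc, mul_inv_cancel₀ hε.ne', one_mul] at this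
      rw [norm_mul, Real.norm_eq_abs, Real.norm_eq_abs,
        abs_of_nonneg (hker_nonneg y)]
      exact mul_le_mul_of_nonneg_left (hbound y hy) (hker_nonneg y)
  calc |∫ y, (ε ^ d)⁻¹ * ρ (ε⁻¹ • y) * f y|
      ≤ ∫ y, (ε ^ d)⁻¹ * ρ (ε⁻¹ • y) * c := by
        rw [← Real.norm_eq_abs]
        exact norm_integral_le_of_norm_le hint (Eventually.of_forall hle)
    _ = c := by rw [MeasureTheory.integral_mul_const, kernel_integral hρ_int hε, one_mul]

variable {γ : EuclideanSpace ℝ (Fin d) → ℝ} {L : ℝ}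

lemma mollify_dist (hρc : Continuous ρ) (hρ_nonneg : ∀ x, 0 ≤ ρ x)
    (hρ_supp : Function.support ρ ⊆ Metric.closedBall 0 1) (hρ_int : ∫ x, ρ x = 1)
    (hL : 0 ≤ L) (hγc : Continuous γ)
    (hγd : ∀ a b : EuclideanSpace ℝ (Fin d), |γ a - γ b| ≤ L * ‖a - b‖)
    {ε : ℝ} (hε : 0 ≤ ε) (z w : EuclideanSpace ℝ (Fin d)) :
    |mollify ρ γ ε z - mollify ρ γ ε w| ≤ L * ‖z - w‖ := by
  rcases eq_or_lt_of_le hε with rfl | hε'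
  · simpa [mollify] using hγd z w
  · unfold mollify
    rw [if_neg hε'.ne', if_neg hε'.ne',
      ← MeasureTheory.integral_sub
        (kernel_integrable hρc hρ_supp hε' (f := fun y => γ (z - y)) (by fun_prop))
        (kernel_integrable hρc hρ_supp hε' (f := fun y => γ (w - y)) (by fun_prop))]
    have : ∀ y : EuclideanSpace ℝ (Fin d),
        (ε ^ d)⁻¹ * ρ (ε⁻¹ • y) * γ (z - y) - (ε ^ d)⁻¹ * ρ (ε⁻¹ • y) * γ (w - y)
          = (ε ^ d)⁻¹ * ρ (ε⁻¹ • y) * (γ (z - y) - γ (w - y)) := fun y => by ring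
    simp_rw [this]
    apply kernel_est hρc hρ_nonneg hρ_supp hρ_int hε' (f := fun y => γ (z - y) - γ (w - y)) (by fun_prop)
    intro y _
    calc |γ (z - y) - γ (w - y)| ≤ L * ‖(z - y) - (w - y)‖ := hγd _ _
      _ = L * ‖z - w‖ := by norm_num

lemma mollify_approx (hρc : Continuous ρ) (hρ_nonneg : ∀ x, 0 ≤ ρ x)
    (hρ_supp : Function.support ρ ⊆ Metric.closedBall 0 1) (hρ_int : ∫ x, ρ x = 1)
    (hL : 0 ≤ L) (hγc : Continuous γ)
    (hγd : ∀ a b : EuclideanSpace ℝ (Fin d), |γ a - γ b| ≤ L * ‖a - b‖)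
    {ε : ℝ} (hε : 0 ≤ ε) (x : EuclideanSpace ℝ (Fin d)) :
    |mollify ρ γ ε x - γ x| ≤ L * ε := by
  rcases eq_or_lt_of_le hε with rfl | hε'
  · simp [mollify]
  · unfold mollify
    rw [if_neg hε'.ne']
    have hγx : γ x = ∫ y : EuclideanSpace ℝ (Fin d), (ε ^ d)⁻¹ * ρ (ε⁻¹ • y) * γ x := by
      rw [MeasureTheory.integral_mul_const, kernel_integral hρ_int hε', one_mul]
    rw [hγx, ← MeasureTheory.integral_sub
        (kernel_integrable hρc hρ_supp hε' (f := fun y => γ (x - y)) (by fun_prop))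
        (kernel_integrable hρc hρ_supp hε' continuous_const)]
    have : ∀ y : EuclideanSpace ℝ (Fin d),
        (ε ^ d)⁻¹ * ρ (ε⁻¹ • y) * γ (x - y) - (ε ^ d)⁻¹ * ρ (ε⁻¹ • y) * γ x
          = (ε ^ d)⁻¹ * ρ (ε⁻¹ • y) * (γ (x - y) - γ x) := fun y => by ring
    simp_rw [this]
    apply kernel_est hρc hρ_nonneg hρ_supp hρ_int hε' (f := fun y => γ (x - y) - γ x) (by fun_prop)
    intro y hy
    calc |γ (x - y) - γ x| ≤ L * ‖(x - y) - x‖ := hγd _ _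
      _ = L * ‖y‖ := by rw [sub_sub_cancel_left, norm_neg]
      _ ≤ L * ε := mul_le_mul_of_nonneg_left hy hL

end Aux

/-- If `εₙ → 0`, `Wₙ → W` strongly in `L²(μ; ℝ^d)`, `ξₙ ⇀ ξ` weakly in `L²(μ; ℝ^d)`, and
`ξₙ(x) ∈ ∂γ_{εₙ}(Wₙ(x))` a.e. for each `n`, then `ξ(x) ∈ ∂γ(W(x))` a.e. and moreover
`∫_Ω γ_{εₙ}(Wₙ) dμ → ∫_Ω γ(W) dμ`. -/
theorem mollify_subdifferential_limit
    {d : ℕ} (hd : 1 ≤ d)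
    (ρ : EuclideanSpace ℝ (Fin d) → ℝ)
    (hρ_smooth : ContDiff ℝ (⊤ : ℕ∞) ρ) (hρ_cpt : HasCompactSupport ρ)
    (hρ_nonneg : ∀ x, 0 ≤ ρ x)
    (hρ_supp : Function.support ρ ⊆ Metric.closedBall 0 1)
    (hρ_int : ∫ x, ρ x = 1)
    (γ : EuclideanSpace ℝ (Fin d) → ℝ)
    (hγ_nonneg : ∀ x, 0 ≤ γ x)
    (hγ_convex : ConvexOn ℝ Set.univ γ)
    (L : ℝ) (hL : 0 ≤ L) (hγ_lip : LipschitzWith (Real.toNNReal L) γ)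
    {Ω : Type*} [MeasurableSpace Ω] (μ : Measure Ω) [IsFiniteMeasure μ]
    (εseq : ℕ → ℝ) (hεseq_nonneg : ∀ n, 0 ≤ εseq n)
    (hεseq_conv : Filter.Tendsto εseq Filter.atTop (nhds 0))
    (W : Ω → EuclideanSpace ℝ (Fin d)) (hW : MemLp W 2 μ)
    (Wseq : ℕ → Ω → EuclideanSpace ℝ (Fin d)) (hWseq : ∀ n, MemLp (Wseq n) 2 μ)
    (hW_strong : Filter.Tendsto (fun n => ∫ x, ‖Wseq n x - W x‖ ^ 2 ∂μ)
      Filter.atTop (nhds 0))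
    (ξ : Ω → EuclideanSpace ℝ (Fin d)) (hξ : MemLp ξ 2 μ)
    (ξseq : ℕ → Ω → EuclideanSpace ℝ (Fin d)) (hξseq : ∀ n, MemLp (ξseq n) 2 μ)
    (hξ_weak : ∀ Z : Ω → EuclideanSpace ℝ (Fin d), MemLp Z 2 μ →
      Filter.Tendsto (fun n => ∫ x, (inner ℝ (ξseq n x) (Z x) : ℝ) ∂μ) Filter.atTop
        (nhds (∫ x, (inner ℝ (ξ x) (Z x) : ℝ) ∂μ)))
    (hξ_sub : ∀ n, ∀ᵐ x ∂μ, ∀ z : EuclideanSpace ℝ (Fin d),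
      (inner ℝ (ξseq n x) (z - Wseq n x) : ℝ) ≤
        mollify ρ γ (εseq n) z - mollify ρ γ (εseq n) (Wseq n x)) :
    (∀ᵐ x ∂μ, ∀ z : EuclideanSpace ℝ (Fin d),
      (inner ℝ (ξ x) (z - W x) : ℝ) ≤ γ z - γ (W x)) ∧
    Filter.Tendsto (fun n => ∫ x, mollify ρ γ (εseq n) (Wseq n x) ∂μ) Filter.atTop
      (nhds (∫ x, γ (W x) ∂μ)) := by
  classical
  have hρc := hρ_smooth.continuous
  have hγc := hγ_lip.continuous
  have hLcoe : ((Real.toNNReal L : NNReal) : ℝ) = L := Real.coe_toNNReal L hL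
  have hγd : ∀ a b : EuclideanSpace ℝ (Fin d), |γ a - γ b| ≤ L * ‖a - b‖ := by
    intro a b
    have := hγ_lip.dist_le_mul a b
    rwa [Real.dist_eq, hLcoe, dist_eq_norm] at this
  have hmold : ∀ {ε : ℝ}, 0 ≤ ε → ∀ z w : EuclideanSpace ℝ (Fin d),
      |mollify ρ γ ε z - mollify ρ γ ε w| ≤ L * ‖z - w‖ :=
    fun {ε} hε z w => mollify_dist hρc hρ_nonneg hρ_supp hρ_int hL hγc hγd hε z w
  have hmola : ∀ {ε : ℝ}, 0 ≤ ε → ∀ x : EuclideanSpace ℝ (Fin d),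
      |mollify ρ γ ε x - γ x| ≤ L * ε :=
    fun {ε} hε x => mollify_approx hρc hρ_nonneg hρ_supp hρ_int hL hγc hγd hε x
  have hmolc : ∀ {ε : ℝ}, 0 ≤ ε → Continuous (mollify ρ γ ε) := by
    intro ε hε
    refine LipschitzWith.continuous (K := Real.toNNReal L) (LipschitzWith.of_dist_le_mul ?_)
    intro z w
    rw [Real.dist_eq, hLcoe, dist_eq_norm]
    exact hmold hε z w
  -- composition with an L-Lipschitz function is integrable
  have comp_int : ∀ g : EuclideanSpace ℝ (Fin d) → ℝ, Continuous g →
      (∀ a b, |g a - g b| ≤ L * ‖a - b‖) →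
      ∀ V : Ω → EuclideanSpace ℝ (Fin d), MemLp V 2 μ →
        Integrable (fun x => g (V x)) μ := by
    intro g hgc hgd V hV
    have hb : Integrable (fun x => |g 0| + L * ‖V x‖) μ :=
      (integrable_const (|g 0|)).add ((hV.integrable one_le_two).norm.const_mul L)
    refine Integrable.mono' hb
      (hgc.comp_aestronglyMeasurable hV.aestronglyMeasurable)
      (Eventually.of_forall fun x => ?_)
    have h1 : |g (V x) - g 0| ≤ L * ‖V x - 0‖ := hgd _ _
    rw [sub_zero] at h1
    have h2 : |g (V x)| ≤ |g (V x) - g 0| + |g 0| := by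
      have := abs_add_le (g (V x) - g 0) (g 0)
      simpa using this
    rw [Real.norm_eq_abs]
    linarith
  -- a.e. norm bound on ξseq n
  have hξb : ∀ n, ∀ᵐ x ∂μ, ‖ξseq n x‖ ≤ L := by
    intro n
    filter_upwards [hξ_sub n] with x hx
    have h1 := hx (Wseq n x + ξseq n x)
    rw [add_sub_cancel_left] at h1
    rw [real_inner_self_eq_norm_sq] at h1
    have h3 : mollify ρ γ (εseq n) (Wseq n x + ξseq n x) - mollify ρ γ (εseq n) (Wseq n x)
        ≤ L * ‖ξseq n x‖ := by
      have h := hmold (hεseq_nonneg n) (Wseq n x + ξseq n x) (Wseq n x)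
      rw [add_sub_cancel_left] at h
      exact (le_abs_self _).trans h
    nlinarith [norm_nonneg (ξseq n x)]
  -- L¹ convergence of Wseq
  have hWint : Integrable W μ := hW.integrable one_le_two
  have hWseqint : ∀ n, Integrable (Wseq n) μ := fun n => (hWseq n).integrable one_le_two
  have hnormint : ∀ n, Integrable (fun x => ‖Wseq n x - W x‖) μ :=
    fun n => ((hWseqint n).sub hWint).norm
  have hI_nonneg : ∀ n, 0 ≤ ∫ x, ‖Wseq n x - W x‖ ∂μ :=
    fun n => integral_nonneg fun x => norm_nonneg _
  have hI0 : Filter.Tendsto (fun n => ∫ x, ‖Wseq n x - W x‖ ∂μ) Filter.atTop (nhds 0) := by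
    have hCS : ∀ n, ∫ x, ‖Wseq n x - W x‖ ∂μ ≤
        (∫ x, ‖Wseq n x - W x‖ ^ 2 ∂μ) ^ (1 / 2 : ℝ) * ((μ Set.univ).toReal) ^ (1 / 2 : ℝ) := by
      intro n
      have h2 : (2 : ℝ).HolderConjugate 2 := Real.HolderConjugate.two_two
      have hf : MemLp (fun x => ‖Wseq n x - W x‖) (ENNReal.ofReal 2) μ := by
        rw [ENNReal.ofReal_ofNat]; exact ((hWseq n).sub hW).norm
      have hg : MemLp (fun _ : Ω => (1 : ℝ)) (ENNReal.ofReal 2) μ := by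
        rw [ENNReal.ofReal_ofNat]; exact memLp_const 1
      have h := integral_mul_le_Lp_mul_Lq_of_nonneg h2
        (Eventually.of_forall fun x => norm_nonneg _)
        (Eventually.of_forall fun _ => zero_le_one) hf hg
      simp only [mul_one, Real.one_rpow, Real.rpow_two, one_pow, integral_const,
        measureReal_def, smul_eq_mul] at h
      convert h using 3 <;> ring
    apply squeeze_zero hI_nonneg hCS
    have h1 : Filter.Tendsto (fun n => (∫ x, ‖Wseq n x - W x‖ ^ 2 ∂μ) ^ (1 / 2 : ℝ))
        Filter.atTop (nhds 0) := by
      have := hW_strong.rpow_const (p := 1 / 2) (Or.inr (by norm_num))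
      rwa [Real.zero_rpow (by norm_num)] at this
    simpa using h1.mul_const (((μ Set.univ).toReal) ^ (1 / 2 : ℝ))
  -- more integrability
  have hγWint : Integrable (fun x => γ (W x)) μ := comp_int γ hγc hγd W hW
  have hmolWnint : ∀ n, Integrable (fun x => mollify ρ γ (εseq n) (Wseq n x)) μ :=
    fun n => comp_int _ (hmolc (hεseq_nonneg n)) (hmold (hεseq_nonneg n)) _ (hWseq n)
  have hinner_int : ∀ V U : Ω → EuclideanSpace ℝ (Fin d), MemLp V 2 μ → MemLp U 2 μ →
      Integrable (fun x => (inner ℝ (V x) (U x) : ℝ)) μ := by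
    intro V U hV hU
    have h := MeasureTheory.L2.integrable_inner (𝕜 := ℝ) (hV.toLp V) (hU.toLp U)
    apply h.congr
    filter_upwards [hV.coeFn_toLp, hU.coeFn_toLp] with x h1 h2
    rw [h1, h2]
  -- the key set-integral inequality
  have key : ∀ (z : EuclideanSpace ℝ (Fin d)) (s : Set Ω), MeasurableSet s →
      ∫ x in s, (inner ℝ (ξ x) (z - W x) : ℝ) ∂μ ≤ ∫ x in s, (γ z - γ (W x)) ∂μ := by
    intro z s hs
    set Z : Ω → EuclideanSpace ℝ (Fin d) := s.indicator (fun x => z - W x) with hZdef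
    have hZmem : MemLp Z 2 μ := MemLp.indicator hs ((memLp_const z).sub hW)
    have hZeq : ∀ V : Ω → EuclideanSpace ℝ (Fin d),
        ∫ x, (inner ℝ (V x) (Z x) : ℝ) ∂μ = ∫ x in s, (inner ℝ (V x) (z - W x) : ℝ) ∂μ := by
      intro V
      rw [← integral_indicator hs]
      congr 1
      ext x
      by_cases hx : x ∈ s
      · simp [hZdef, Set.indicator_of_mem hx]
      · simp [hZdef, Set.indicator_of_notMem hx]
    have ha : Filter.Tendsto (fun n => ∫ x in s, (inner ℝ (ξseq n x) (z - Wseq n x) : ℝ) ∂μ)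
        Filter.atTop (nhds (∫ x in s, (inner ℝ (ξ x) (z - W x) : ℝ) ∂μ)) := by
      have hsplit : ∀ n, ∫ x in s, (inner ℝ (ξseq n x) (z - Wseq n x) : ℝ) ∂μ
          = (∫ x, (inner ℝ (ξseq n x) (Z x) : ℝ) ∂μ)
            + ∫ x in s, (inner ℝ (ξseq n x) (W x - Wseq n x) : ℝ) ∂μ := by
        intro n
        rw [hZeq, ← integral_add
          ((hinner_int (ξseq n) (fun x => z - W x) (hξseq n)
            ((memLp_const z).sub hW)).integrableOn)
          ((hinner_int (ξseq n) (fun x => W x - Wseq n x) (hξseq n)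
            (hW.sub (hWseq n))).integrableOn)]
        apply setIntegral_congr_fun hs
        intro x _
        show (inner ℝ (ξseq n x) (z - Wseq n x) : ℝ)
          = inner ℝ (ξseq n x) (z - W x) + inner ℝ (ξseq n x) (W x - Wseq n x)
        rw [← inner_add_right, sub_add_sub_cancel]
      have h2 : Filter.Tendsto (fun n => ∫ x in s, (inner ℝ (ξseq n x) (W x - Wseq n x) : ℝ) ∂μ)
          Filter.atTop (nhds 0) := by
        apply squeeze_zero_norm (a := fun n => L * ∫ x, ‖Wseq n x - W x‖ ∂μ)
        · intro n
          have hb : ∀ᵐ x ∂μ.restrict s,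
              ‖(inner ℝ (ξseq n x) (W x - Wseq n x) : ℝ)‖ ≤ L * ‖Wseq n x - W x‖ := by
            filter_upwards [ae_restrict_of_ae (hξb n)] with x hx
            calc ‖(inner ℝ (ξseq n x) (W x - Wseq n x) : ℝ)‖
                ≤ ‖ξseq n x‖ * ‖W x - Wseq n x‖ := norm_inner_le_norm _ _
              _ ≤ L * ‖W x - Wseq n x‖ := mul_le_mul_of_nonneg_right hx (norm_nonneg _)
              _ = L * ‖Wseq n x - W x‖ := by rw [norm_sub_rev]
          calc ‖∫ x in s, (inner ℝ (ξseq n x) (W x - Wseq n x) : ℝ) ∂μ‖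
              ≤ ∫ x in s, L * ‖Wseq n x - W x‖ ∂μ :=
                norm_integral_le_of_norm_le (((hnormint n).const_mul L).integrableOn) hb
            _ ≤ ∫ x, L * ‖Wseq n x - W x‖ ∂μ :=
                setIntegral_le_integral ((hnormint n).const_mul L)
                  (Eventually.of_forall fun x => mul_nonneg hL (norm_nonneg _))
            _ = L * ∫ x, ‖Wseq n x - W x‖ ∂μ := integral_const_mul L _
        · simpa using hI0.const_mul L
      have h1 := hξ_weak Z hZmem
      rw [hZeq] at h1
      have h3 := h1.add h2
      rw [add_zero] at h3
      exact Filter.Tendsto.congr (fun n => (hsplit n).symm) h3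
    have hb : Filter.Tendsto
        (fun n => ∫ x in s, (mollify ρ γ (εseq n) z - mollify ρ γ (εseq n) (Wseq n x)) ∂μ)
        Filter.atTop (nhds (∫ x in s, (γ z - γ (W x)) ∂μ)) := by
      have hdiff : Filter.Tendsto
          (fun n => (∫ x in s, (mollify ρ γ (εseq n) z - mollify ρ γ (εseq n) (Wseq n x)) ∂μ)
            - ∫ x in s, (γ z - γ (W x)) ∂μ) Filter.atTop (nhds 0) := by
        apply squeeze_zero_norm
          (a := fun n => 2 * L * εseq n * (μ Set.univ).toReal
            + L * ∫ x, ‖Wseq n x - W x‖ ∂μ)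
        · intro n
          have hin1 : Integrable
              (fun x => mollify ρ γ (εseq n) z - mollify ρ γ (εseq n) (Wseq n x)) μ :=
            (integrable_const _).sub (hmolWnint n)
          have hin2 : Integrable (fun x => γ z - γ (W x)) μ := (integrable_const _).sub hγWint
          rw [← integral_sub hin1.integrableOn hin2.integrableOn]
          have hbnd : Integrable (fun x => 2 * L * εseq n + L * ‖Wseq n x - W x‖) μ :=
            (integrable_const _).add ((hnormint n).const_mul L)
          calc ‖∫ x in s, ((mollify ρ γ (εseq n) z - mollify ρ γ (εseq n) (Wseq n x))
                  - (γ z - γ (W x))) ∂μ‖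
              ≤ ∫ x in s, (2 * L * εseq n + L * ‖Wseq n x - W x‖) ∂μ := by
                apply norm_integral_le_of_norm_le hbnd.integrableOn
                apply Eventually.of_forall
                intro x
                have e1 := hmola (hεseq_nonneg n) z
                have e2 := hmola (hεseq_nonneg n) (Wseq n x)
                have e3 := hγd (Wseq n x) (W x)
                rw [Real.norm_eq_abs]
                have expand : (mollify ρ γ (εseq n) z - mollify ρ γ (εseq n) (Wseq n x))
                    - (γ z - γ (W x))
                    = (mollify ρ γ (εseq n) z - γ z)
                      - (mollify ρ γ (εseq n) (Wseq n x) - γ (Wseq n x))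
                      - (γ (Wseq n x) - γ (W x)) := by ring
                rw [expand]
                have t1 := abs_sub ((mollify ρ γ (εseq n) z - γ z)
                    - (mollify ρ γ (εseq n) (Wseq n x) - γ (Wseq n x)))
                  (γ (Wseq n x) - γ (W x))
                have t2 := abs_sub (mollify ρ γ (εseq n) z - γ z)
                  (mollify ρ γ (εseq n) (Wseq n x) - γ (Wseq n x))
                linarith
            _ ≤ ∫ x, (2 * L * εseq n + L * ‖Wseq n x - W x‖) ∂μ :=
                setIntegral_le_integral hbnd (Eventually.of_forall fun x => by
                  show (0:ℝ) ≤ 2 * L * εseq n + L * ‖Wseq n x - W x‖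
                  have h1 := mul_nonneg hL (norm_nonneg (Wseq n x - W x))
                  have h2 := mul_nonneg (mul_nonneg (by norm_num : (0:ℝ) ≤ 2) hL)
                    (hεseq_nonneg n)
                  linarith)
            _ = 2 * L * εseq n * (μ Set.univ).toReal + L * ∫ x, ‖Wseq n x - W x‖ ∂μ := by
                rw [integral_add (integrable_const _) ((hnormint n).const_mul L),
                  integral_const, measureReal_def, smul_eq_mul, integral_const_mul, mul_comm ((μ Set.univ).toReal)]
        · have t1 : Filter.Tendsto (fun n => 2 * L * εseq n * (μ Set.univ).toReal)
              Filter.atTop (nhds 0) := by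
            simpa using (hεseq_conv.const_mul (2 * L)).mul_const ((μ Set.univ).toReal)
          have t2 := hI0.const_mul L
          simpa using t1.add t2
      have h := hdiff.add (tendsto_const_nhds (x := ∫ x in s, (γ z - γ (W x)) ∂μ))
      simpa using h
    have hle : ∀ n, ∫ x in s, (inner ℝ (ξseq n x) (z - Wseq n x) : ℝ) ∂μ
        ≤ ∫ x in s, (mollify ρ γ (εseq n) z - mollify ρ γ (εseq n) (Wseq n x)) ∂μ := by
      intro n
      apply integral_mono_ae
        ((hinner_int (ξseq n) (fun x => z - Wseq n x) (hξseq n)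
          ((memLp_const z).sub (hWseq n))).integrableOn)
        (((integrable_const _).sub (hmolWnint n)).integrableOn)
      exact ae_restrict_of_ae ((hξ_sub n).mono fun x hx => hx z)
    exact le_of_tendsto_of_tendsto' ha hb hle
  -- first conclusion
  have main : ∀ᵐ x ∂μ, ∀ z : EuclideanSpace ℝ (Fin d),
      (inner ℝ (ξ x) (z - W x) : ℝ) ≤ γ z - γ (W x) := by
    obtain ⟨D, hDc, hDd⟩ :=
      TopologicalSpace.exists_countable_dense (EuclideanSpace ℝ (Fin d))
    have hz : ∀ z ∈ D, ∀ᵐ x ∂μ, (inner ℝ (ξ x) (z - W x) : ℝ) ≤ γ z - γ (W x) := by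
      intro z _
      have hint1 : Integrable (fun x => γ z - γ (W x)) μ := (integrable_const _).sub hγWint
      have hint2 : Integrable (fun x => (inner ℝ (ξ x) (z - W x) : ℝ)) μ :=
        hinner_int ξ (fun x => z - W x) hξ ((memLp_const z).sub hW)
      have hint3 : Integrable
          (fun x => γ z - γ (W x) - (inner ℝ (ξ x) (z - W x) : ℝ)) μ := hint1.sub hint2
      have hae := ae_nonneg_of_forall_setIntegral_nonneg hint3 (fun s hs _ => by
        rw [integral_sub hint1.integrableOn hint2.integrableOn]
        have := key z s hs
        linarith)
      filter_upwards [hae] with x hx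
      simp only [Pi.zero_apply] at hx
      linarith
    have hall := (ae_ball_iff hDc).mpr hz
    filter_upwards [hall] with x hx
    intro z
    set C : Set (EuclideanSpace ℝ (Fin d)) :=
      {w | (inner ℝ (ξ x) (w - W x) : ℝ) - (γ w - γ (W x)) ≤ 0} with hCdef
    have hCclosed : IsClosed C := by
      apply isClosed_le _ continuous_const
      exact (Continuous.inner continuous_const
        (continuous_id.sub continuous_const)).sub (hγc.sub continuous_const)
    have hsub : D ⊆ C := fun w hw => sub_nonpos.mpr (hx w hw)
    have hzC : z ∈ C := by
      have h1 : closure D ⊆ C := hCclosed.closure_subset_iff.mpr hsub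
      exact h1 (hDd.closure_eq ▸ Set.mem_univ z)
    have := hzC
    rw [hCdef] at this
    simp only [Set.mem_setOf_eq, sub_nonpos] at this
    exact this
  refine ⟨main, ?_⟩
  -- second conclusion
  have hdiff : Filter.Tendsto
      (fun n => (∫ x, mollify ρ γ (εseq n) (Wseq n x) ∂μ) - ∫ x, γ (W x) ∂μ)
      Filter.atTop (nhds 0) := by
    apply squeeze_zero_norm
      (a := fun n => L * εseq n * (μ Set.univ).toReal + L * ∫ x, ‖Wseq n x - W x‖ ∂μ)
    · intro n
      rw [← integral_sub (hmolWnint n) hγWint]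
      have hbnd : Integrable (fun x => L * εseq n + L * ‖Wseq n x - W x‖) μ :=
        (integrable_const _).add ((hnormint n).const_mul L)
      calc ‖∫ x, (mollify ρ γ (εseq n) (Wseq n x) - γ (W x)) ∂μ‖
          ≤ ∫ x, (L * εseq n + L * ‖Wseq n x - W x‖) ∂μ := by
            apply norm_integral_le_of_norm_le hbnd
            apply Eventually.of_forall
            intro x
            have e2 := hmola (hεseq_nonneg n) (Wseq n x)
            have e3 := hγd (Wseq n x) (W x)
            rw [Real.norm_eq_abs]
            have expand : mollify ρ γ (εseq n) (Wseq n x) - γ (W x)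
                = (mollify ρ γ (εseq n) (Wseq n x) - γ (Wseq n x))
                  + (γ (Wseq n x) - γ (W x)) := by ring
            rw [expand]
            calc |(mollify ρ γ (εseq n) (Wseq n x) - γ (Wseq n x))
                  + (γ (Wseq n x) - γ (W x))|
                ≤ |mollify ρ γ (εseq n) (Wseq n x) - γ (Wseq n x)|
                  + |γ (Wseq n x) - γ (W x)| := abs_add_le _ _
              _ ≤ L * εseq n + L * ‖Wseq n x - W x‖ := add_le_add e2 e3
        _ = L * εseq n * (μ Set.univ).toReal + L * ∫ x, ‖Wseq n x - W x‖ ∂μ := by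
            rw [integral_add (integrable_const _) ((hnormint n).const_mul L),
              integral_const, measureReal_def, smul_eq_mul, integral_const_mul, mul_comm ((μ Set.univ).toReal)]
    · have t1 : Filter.Tendsto (fun n => L * εseq n * (μ Set.univ).toReal)
          Filter.atTop (nhds 0) := by
        simpa using (hεseq_conv.const_mul L).mul_const ((μ Set.univ).toReal)
      have t2 := hI0.const_mul L
      simpa using t1.add t2
  have h := hdiff.add (tendsto_const_nhds (x := ∫ x, γ (W x) ∂μ))
  simpa using h
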